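/- Let g : ℝ^n × ℝ^m → ℝ ∪ {-∞} be concave and upper-semicontinuous with some point (x°, y°) in the interior of its domain. Define h(x) := lim_{λ↗1} sup_{y ∈ ℝ^m} g(λ x + (1−λ) x°, y). Then h is upper-semicontinuous (it equals the upper-semicontinuous hull of x ↦ sup_y g(x, y)), and moreover h(x) = lim_{λ↗1} sup_{y ∈ ℚ^m} g(λ x + (1−λ) x°, y): the supremum over ℝ^m may be replaced by the supremum over the countable dense set ℚ^m. -/

import Mathlib

open MeasureTheory Filter
open scoped ENNReal

/-- Concavity for extended-real-valued functions (values in `ℝ ∪ {-∞} ⊆ EReal`). -/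
def IsConcaveE {E : Type*} [AddCommGroup E] [Module ℝ E] (f : E → EReal) : Prop :=
  ∀ x y : E, ∀ a b : ℝ, 0 ≤ a → 0 ≤ b → a + b = 1 →
    (a : EReal) * f x + (b : EReal) * f y ≤ f (a • x + b • y)

/-- Horizon (recession) function of `f` with base point `x`:
`f^∞(h) = inf_{n ∈ ℕ+} (1/n) (f (x + n h) - f x)`. -/
noncomputable def hor {E : Type*} [AddCommGroup E] [Module ℝ E]
    (f : E → EReal) (x h : E) : EReal :=
  ⨅ n : ℕ+, ((n : ℝ)⁻¹ : EReal) * (f (x + (n : ℝ) • h) - f x)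



open Metric Set
open scoped Topology


private lemma ereal_comb_self {p : EReal} {a b : ℝ} (ha : 0 ≤ a) (hb : 0 ≤ b) (hab : a + b = 1) :
    (a : EReal) * p + (b : EReal) * p = p := by
  rcases ha.eq_or_lt with ha0 | ha0
  · have hb1 : b = 1 := by linarith
    simp [← ha0, hb1]
  rcases hb.eq_or_lt with hb0 | hb0
  · have ha1 : a = 1 := by linarith
    simp [← hb0, ha1]
  induction p with
  | bot =>
      rw [EReal.coe_mul_bot_of_pos ha0, EReal.coe_mul_bot_of_pos hb0, EReal.add_bot]
  | coe p =>
      rw [← EReal.coe_mul, ← EReal.coe_mul, ← EReal.coe_add]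
      norm_cast
      linear_combination p * hab
  | top =>
      rw [EReal.coe_mul_top_of_pos ha0, EReal.coe_mul_top_of_pos hb0]
      rfl

private lemma ereal_min_le_comb {p q : EReal} {a b : ℝ} (ha : 0 ≤ a) (hb : 0 ≤ b)
    (hab : a + b = 1) : min p q ≤ (a : EReal) * p + (b : EReal) * q := by
  rcases le_total p q with h | h
  · rw [min_eq_left h]
    nth_rewrite 1 [← ereal_comb_self (p := p) ha hb hab]
    exact add_le_add_right (mul_le_mul_of_nonneg_left h (by exact_mod_cast hb : (0 : EReal) ≤ (b : EReal))) _
  · rw [min_eq_right h]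
    nth_rewrite 1 [← ereal_comb_self (p := q) ha hb hab]
    exact add_le_add_left (mul_le_mul_of_nonneg_left h (by exact_mod_cast ha : (0 : EReal) ≤ (a : EReal))) _

private lemma concaveE_continuousOn {V : Type*} [NormedAddCommGroup V] [NormedSpace ℝ V]
    [FiniteDimensional ℝ V] {f : V → EReal}
    (hf : ∀ x y : V, ∀ a b : ℝ, 0 ≤ a → 0 ≤ b → a + b = 1 →
      (a : EReal) * f x + (b : EReal) * f y ≤ f (a • x + b • y))
    {c : V} {r : ℝ}
    (hbot : ∀ z ∈ Metric.ball c r, f z ≠ ⊥) (htop : ∀ z, f z ≠ ⊤) :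
    ContinuousOn (fun z => (f z).toReal) (Metric.ball c r) := by
  have hconc : ConcaveOn ℝ (Metric.ball c r) (fun z => (f z).toReal) := by
    refine ⟨convex_ball c r, fun p hp q hq a b ha hb hab => ?_⟩
    have hmem : a • p + b • q ∈ Metric.ball c r := (convex_ball c r) hp hq ha hb hab
    have h1 := hf p q a b ha hb hab
    rw [show (a : EReal) * f p = ((a * (f p).toReal : ℝ) : EReal) by
          rw [EReal.coe_mul, EReal.coe_toReal (htop p) (hbot p hp)],
        show (b : EReal) * f q = ((b * (f q).toReal : ℝ) : EReal) by
          rw [EReal.coe_mul, EReal.coe_toReal (htop q) (hbot q hq)],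
        ← EReal.coe_add] at h1
    have h2 := EReal.toReal_le_toReal h1 (EReal.coe_ne_bot _) (htop _)
    rw [EReal.toReal_coe] at h2
    simpa [smul_eq_mul] using h2
  exact hconc.continuousOn Metric.isOpen_ball

private lemma exists_rat_vec_near {m : ℕ} (w : Fin m → ℝ) {δ : ℝ} (hδ : 0 < δ) :
    ∃ q : Fin m → ℚ, dist (fun i => (q i : ℝ)) w < δ := by
  have h : ∀ i, ∃ qi : ℚ, |w i - (qi : ℝ)| < δ / 2 := fun i => exists_rat_near (w i) (by linarith)
  choose q hq using h
  refine ⟨q, ?_⟩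
  rw [dist_pi_lt_iff hδ]
  intro i
  rw [Real.dist_eq, abs_sub_comm]
  exact (hq i).trans (by linarith)

private lemma seg_comb {n : ℕ} (x₀ x : Fin n → ℝ) {a b t u : ℝ} (hab : a + b = 1) :
    a • (t • x + (1 - t) • x₀) + b • (u • x + (1 - u) • x₀)
      = (a * t + b * u) • x + (1 - (a * t + b * u)) • x₀ := by
  have hb : b = 1 - a := by linarith
  subst hb
  match_scalars <;> ring

private lemma sup_seg_le {n m : ℕ} {g : (Fin n → ℝ) × (Fin m → ℝ) → EReal}
    (hconc : ∀ p q : (Fin n → ℝ) × (Fin m → ℝ), ∀ a b : ℝ, 0 ≤ a → 0 ≤ b → a + b = 1 →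
      (a : EReal) * g p + (b : EReal) * g q ≤ g (a • p + b • q))
    (x₀ x : Fin n → ℝ) {t u s a b : ℝ}
    (ha : 0 ≤ a) (hb : 0 ≤ b) (hab : a + b = 1) (hs : a * t + b * u = s)
    (hle : (⨆ y : Fin m → ℝ, g (t • x + (1 - t) • x₀, y))
        ≤ ⨆ y : Fin m → ℝ, g (u • x + (1 - u) • x₀, y)) :
    (⨆ y : Fin m → ℝ, g (t • x + (1 - t) • x₀, y))
      ≤ ⨆ y : Fin m → ℝ, g (s • x + (1 - s) • x₀, y) := by
  refine iSup_le fun y => le_of_forall_lt fun M hM => ?_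
  have hM' : M < ⨆ y' : Fin m → ℝ, g (u • x + (1 - u) • x₀, y') :=
    lt_of_lt_of_le hM ((le_iSup (fun y => g (t • x + (1 - t) • x₀, y)) y).trans hle)
  rw [lt_iSup_iff] at hM'
  obtain ⟨y', hy'⟩ := hM'
  have hcc := hconc (t • x + (1 - t) • x₀, y) (u • x + (1 - u) • x₀, y') a b ha hb hab
  have hpt : a • ((t • x + (1 - t) • x₀ : Fin n → ℝ), y)
      + b • ((u • x + (1 - u) • x₀ : Fin n → ℝ), y')
      = (s • x + (1 - s) • x₀, a • y + b • y') := by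
    rw [Prod.smul_mk, Prod.smul_mk, Prod.mk_add_mk, seg_comb x₀ x hab, hs]
  rw [hpt] at hcc
  calc M < min (g (t • x + (1 - t) • x₀, y)) (g (u • x + (1 - u) • x₀, y')) := lt_min hM hy'
    _ ≤ _ := (ereal_min_le_comb ha hb hab).trans hcc
    _ ≤ _ := le_iSup (fun y => g (s • x + (1 - s) • x₀, y)) (a • y + b • y')

private lemma sup_quasi {n m : ℕ} {g : (Fin n → ℝ) × (Fin m → ℝ) → EReal}
    (hconc : ∀ p q : (Fin n → ℝ) × (Fin m → ℝ), ∀ a b : ℝ, 0 ≤ a → 0 ≤ b → a + b = 1 →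
      (a : EReal) * g p + (b : EReal) * g q ≤ g (a • p + b • q))
    (x₀ x : Fin n → ℝ) {t s u : ℝ} (hts : t ≤ s) (hsu : s ≤ u) :
    min (⨆ y : Fin m → ℝ, g (t • x + (1 - t) • x₀, y))
        (⨆ y : Fin m → ℝ, g (u • x + (1 - u) • x₀, y))
      ≤ ⨆ y : Fin m → ℝ, g (s • x + (1 - s) • x₀, y) := by
  rcases eq_or_lt_of_le (hts.trans hsu) with h | h
  · obtain rfl : t = u := h
    obtain rfl : s = t := le_antisymm hsu hts
    exact min_le_left _ _
  · have hut : 0 < u - t := by linarith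
    set a := (u - s) / (u - t) with ha_def
    set b := (s - t) / (u - t) with hb_def
    have ha : 0 ≤ a := div_nonneg (by linarith) hut.le
    have hb : 0 ≤ b := div_nonneg (by linarith) hut.le
    have hab : a + b = 1 := by rw [ha_def, hb_def]; field_simp; ring
    have hs : a * t + b * u = s := by rw [ha_def, hb_def]; field_simp; ring
    rcases le_total (⨆ y : Fin m → ℝ, g (t • x + (1 - t) • x₀, y))
        (⨆ y : Fin m → ℝ, g (u • x + (1 - u) • x₀, y)) with hle | hle
    · rw [min_eq_left hle]
      exact sup_seg_le hconc x₀ x ha hb hab hs hle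
    · rw [min_eq_right hle]
      exact sup_seg_le hconc x₀ x hb ha (by linarith) (by linarith) hle

private lemma tendsto_limsup_of_quasi {f : ℝ → EReal}
    (hq : ∀ t s u : ℝ, t ≤ s → s ≤ u → min (f t) (f u) ≤ f s) :
    Tendsto f (𝓝[<] (1 : ℝ)) (𝓝 (limsup f (𝓝[<] (1 : ℝ)))) := by
  have hle : limsup f (𝓝[<] (1 : ℝ)) ≤ liminf f (𝓝[<] (1 : ℝ)) := by
    refine le_of_forall_lt fun M hM => ?_
    obtain ⟨M', hMM', hM'⟩ := exists_between hM
    have hfreq : ∃ᶠ t in 𝓝[<] (1 : ℝ), M' < f t :=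
      frequently_lt_of_lt_limsup (by isBoundedDefault) hM'
    obtain ⟨t₁, ht₁M, ht₁⟩ := (hfreq.and_eventually self_mem_nhdsWithin).exists
    have hev : ∀ᶠ s in 𝓝[<] (1 : ℝ), M' ≤ f s := by
      filter_upwards [Ioo_mem_nhdsLT_of_mem (right_mem_Ioc.mpr ht₁)] with s hs
      obtain ⟨t₂, hM't₂, ht₂⟩ :=
        (hfreq.and_eventually (Ioo_mem_nhdsLT_of_mem (right_mem_Ioc.mpr hs.2))).exists
      exact ((lt_min ht₁M hM't₂).trans_le (hq t₁ s t₂ hs.1.le ht₂.1.le)).le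
    exact lt_of_lt_of_le hMM' (le_liminf_of_le (by isBoundedDefault) hev)
  exact tendsto_of_liminf_eq_limsup (le_antisymm (liminf_le_limsup) hle) rfl

/-- for `g : ℝ^n × ℝ^m → ℝ ∪ {-∞}` concave, usc, with `(x°,y°)` interior
to `dom g`, the function `h(x) := lim_{λ↗1} sup_y g(λ x + (1−λ) x°, y)` (realized as a
`limsup`, which the first conclusion identifies as a genuine limit) is usc, and the
supremum over `ℝ^m` may be replaced by the supremum over `ℚ^m`. -/
theorem stmt15 {n m : ℕ} (g : (Fin n → ℝ) × (Fin m → ℝ) → EReal)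
    (hconc : IsConcaveE g) (husc : UpperSemicontinuous g) (hne_top : ∀ p, g p ≠ ⊤)
    (x₀ : Fin n → ℝ) (y₀ : Fin m → ℝ)
    (hint : ∃ ε > (0 : ℝ), ∀ p : (Fin n → ℝ) × (Fin m → ℝ),
      dist p (x₀, y₀) < ε → g p ≠ ⊥) :
    (∀ x : Fin n → ℝ,
      Tendsto (fun t : ℝ => ⨆ y : Fin m → ℝ, g (t • x + (1 - t) • x₀, y))
        (nhdsWithin 1 (Set.Iio 1))
        (nhds (limsup (fun t : ℝ => ⨆ y : Fin m → ℝ, g (t • x + (1 - t) • x₀, y))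
          (nhdsWithin 1 (Set.Iio 1))))) ∧
    UpperSemicontinuous (fun x : Fin n → ℝ =>
      limsup (fun t : ℝ => ⨆ y : Fin m → ℝ, g (t • x + (1 - t) • x₀, y))
        (nhdsWithin 1 (Set.Iio 1))) ∧
    (∀ x : Fin n → ℝ,
      limsup (fun t : ℝ => ⨆ y : Fin m → ℝ, g (t • x + (1 - t) • x₀, y))
          (nhdsWithin 1 (Set.Iio 1))
        = limsup (fun t : ℝ => ⨆ q : Fin m → ℚ, g (t • x + (1 - t) • x₀, fun i => (q i : ℝ)))
          (nhdsWithin 1 (Set.Iio 1))) := by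
  classical
  obtain ⟨ε, hε, hdom⟩ := hint
  -- Part 1
  have part1 : ∀ x : Fin n → ℝ,
      Tendsto (fun t : ℝ => ⨆ y : Fin m → ℝ, g (t • x + (1 - t) • x₀, y))
        (𝓝[<] (1 : ℝ))
        (𝓝 (limsup (fun t : ℝ => ⨆ y : Fin m → ℝ, g (t • x + (1 - t) • x₀, y))
          (𝓝[<] (1 : ℝ)))) := by
    intro x
    exact tendsto_limsup_of_quasi (fun t s u hts hsu => sup_quasi hconc x₀ x hts hsu)
  refine ⟨part1, ?_, ?_⟩
  · -- Part 2 : upper semicontinuity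
    -- lower bound for g on the closed ball of radius ε/2
    have hballbot : ∀ p ∈ Metric.ball ((x₀, y₀) : (Fin n → ℝ) × (Fin m → ℝ)) ε, g p ≠ ⊥ :=
      fun p hp => hdom p (by simpa [Metric.mem_ball] using hp)
    have hcontball := concaveE_continuousOn hconc hballbot hne_top
    obtain ⟨pm, hpm_mem, hpm⟩ :=
      (isCompact_closedBall ((x₀, y₀) : (Fin n → ℝ) × (Fin m → ℝ)) (ε / 2)).exists_isMinOn
        ⟨(x₀, y₀), Metric.mem_closedBall_self (by linarith)⟩
        (hcontball.mono (fun p hp => Metric.closedBall_subset_ball (by linarith) hp))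
    set mo : ℝ := (g pm).toReal with hmo
    have hm : ∀ p ∈ Metric.closedBall ((x₀, y₀) : (Fin n → ℝ) × (Fin m → ℝ)) (ε / 2),
        (mo : EReal) ≤ g p := by
      intro p hp
      have hpball : p ∈ Metric.ball ((x₀, y₀) : (Fin n → ℝ) × (Fin m → ℝ)) ε :=
        Metric.closedBall_subset_ball (by linarith) hp
      calc (mo : EReal) ≤ (((g p).toReal : ℝ) : EReal) := by exact_mod_cast isMinOn_iff.mp hpm p hp
        _ = g p := EReal.coe_toReal (hne_top p) (hballbot p hpball)
    -- the two halves of the identification with the usc regularization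
    have h2a : ∀ x : Fin n → ℝ,
        limsup (fun t : ℝ => ⨆ y : Fin m → ℝ, g (t • x + (1 - t) • x₀, y)) (𝓝[<] (1 : ℝ))
          ≤ limsup (fun z : Fin n → ℝ => ⨆ y : Fin m → ℝ, g (z, y)) (𝓝 x) := by
      intro x
      have htend : Tendsto (fun t : ℝ => t • x + (1 - t) • x₀) (𝓝[<] (1 : ℝ)) (𝓝 x) := by
        have hcont : Continuous (fun t : ℝ => t • x + (1 - t) • x₀) := by fun_prop
        have h1 := (hcont.tendsto 1).mono_left (nhdsWithin_le_nhds (s := Set.Iio (1 : ℝ)))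
        simpa using h1
      refine le_of_forall_gt fun c hc => ?_
      obtain ⟨c', hc₁, hc₂⟩ := exists_between hc
      have hev : ∀ᶠ z in 𝓝 x, (⨆ y : Fin m → ℝ, g (z, y)) < c' :=
        eventually_lt_of_limsup_lt hc₁
      have hev2 : ∀ᶠ t in 𝓝[<] (1 : ℝ),
          (⨆ y : Fin m → ℝ, g (t • x + (1 - t) • x₀, y)) ≤ c' :=
        (htend.eventually hev).mono fun t ht => ht.le
      exact lt_of_le_of_lt (limsup_le_of_le (by isBoundedDefault) hev2) hc₂
    have h2b : ∀ x : Fin n → ℝ,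
        limsup (fun z : Fin n → ℝ => ⨆ y : Fin m → ℝ, g (z, y)) (𝓝 x)
          ≤ limsup (fun t : ℝ => ⨆ y : Fin m → ℝ, g (t • x + (1 - t) • x₀, y))
              (𝓝[<] (1 : ℝ)) := by
      intro x
      refine le_of_forall_gt fun cE hcE => ?_
      obtain ⟨b, hb₁, hb₂⟩ := EReal.exists_between_coe_real hcE
      refine lt_of_le_of_lt ?_ hb₂
      have key : ∀ η : ℝ, 0 < η →
          limsup (fun z : Fin n → ℝ => ⨆ y : Fin m → ℝ, g (z, y)) (𝓝 x)
            ≤ ((b + η : ℝ) : EReal) := by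
        intro η hη
        have hev : ∀ᶠ t in 𝓝[<] (1 : ℝ),
            (⨆ y : Fin m → ℝ, g (t • x + (1 - t) • x₀, y)) < (b : EReal) :=
          eventually_lt_of_limsup_lt hb₁
        have hβ : Tendsto (fun t : ℝ => (b - (1 - t) * mo) / t) (𝓝[<] (1 : ℝ)) (𝓝 b) := by
          have hca : ContinuousAt (fun t : ℝ => (b - (1 - t) * mo) / t) 1 := by
            fun_prop (disch := norm_num)
          have h2 := hca.tendsto.mono_left (nhdsWithin_le_nhds (s := Set.Iio (1 : ℝ)))
          simpa using h2
        have hβev : ∀ᶠ t in 𝓝[<] (1 : ℝ), (b - (1 - t) * mo) / t < b + η :=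
          hβ.eventually (eventually_lt_nhds (by linarith))
        have hIoo : ∀ᶠ t in 𝓝[<] (1 : ℝ), t ∈ Set.Ioo (1 / 2 : ℝ) 1 :=
          Filter.eventually_mem_set.mpr (Ioo_mem_nhdsLT (by norm_num))
        obtain ⟨t, ⟨hFt, hβt⟩, ht⟩ := ((hev.and hβev).and hIoo).exists
        have ht0 : 0 < t := by have := ht.1; linarith
        have h1t : 0 < 1 - t := by have := ht.2; linarith
        have hball : ∀ x' ∈ Metric.ball x ((1 - t) * ε / (2 * t)),
            (⨆ y : Fin m → ℝ, g (x', y)) ≤ (((b - (1 - t) * mo) / t : ℝ) : EReal) := by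
          intro x' hx'
          refine iSup_le fun y => ?_
          set z : Fin n → ℝ := x₀ + (t / (1 - t)) • (x - x') with hz
          have hdzx : dist z x₀ ≤ ε / 2 := by
            have he1 : dist z x₀ = (t / (1 - t)) * dist x x' := by
              rw [hz, dist_eq_norm, add_sub_cancel_left, norm_smul, Real.norm_eq_abs,
                abs_of_pos (div_pos ht0 h1t), dist_eq_norm]
            have hx'' : dist x x' ≤ (1 - t) * ε / (2 * t) := by
              rw [dist_comm]; exact (Metric.mem_ball.mp hx').le
            rw [he1]
            calc (t / (1 - t)) * dist x x' ≤ (t / (1 - t)) * ((1 - t) * ε / (2 * t)) :=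
                  mul_le_mul_of_nonneg_left hx'' (div_pos ht0 h1t).le
              _ = ε / 2 := by field_simp
          have hzball : ((z, y₀) : (Fin n → ℝ) × (Fin m → ℝ))
              ∈ Metric.closedBall ((x₀, y₀) : (Fin n → ℝ) × (Fin m → ℝ)) (ε / 2) := by
            rw [Metric.mem_closedBall, Prod.dist_eq]
            simp only [dist_self]
            exact max_le hdzx (by linarith)
          have hmz : (mo : EReal) ≤ g (z, y₀) := hm _ hzball
          have hcc := hconc (x', y) (z, y₀) t (1 - t) ht0.le h1t.le (by ring)
          have hpt : (t : ℝ) • ((x' : Fin n → ℝ), y) + (1 - t) • ((z : Fin n → ℝ), y₀)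
              = (t • x + (1 - t) • x₀, t • y + (1 - t) • y₀) := by
            rw [Prod.smul_mk, Prod.smul_mk, Prod.mk_add_mk]
            congr 1
            have h1t' : (1 : ℝ) - t ≠ 0 := ne_of_gt h1t
            rw [hz]
            match_scalars <;> (field_simp; try ring)
          rw [hpt] at hcc
          have hchain : (t : EReal) * g (x', y) + (((1 - t) * mo : ℝ) : EReal) < (b : EReal) := by
            calc (t : EReal) * g (x', y) + (((1 - t) * mo : ℝ) : EReal)
                = (t : EReal) * g (x', y) + ((1 - t : ℝ) : EReal) * (mo : EReal) := by
                  rw [EReal.coe_mul]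
              _ ≤ (t : EReal) * g (x', y) + ((1 - t : ℝ) : EReal) * g (z, y₀) :=
                  add_le_add_right (mul_le_mul_of_nonneg_left hmz (by exact_mod_cast h1t.le : (0 : EReal) ≤ ((1 - t : ℝ) : EReal))) _
              _ ≤ g (t • x + (1 - t) • x₀, t • y + (1 - t) • y₀) := hcc
              _ ≤ ⨆ y'' : Fin m → ℝ, g (t • x + (1 - t) • x₀, y'') :=
                  le_iSup (fun y'' => g (t • x + (1 - t) • x₀, y'')) _
              _ < (b : EReal) := hFt
          rcases eq_or_ne (g (x', y)) ⊥ with hbot | hbot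
          · rw [hbot]; exact bot_le
          · have hgeq : g (x', y) = (((g (x', y)).toReal : ℝ) : EReal) :=
              (EReal.coe_toReal (hne_top _) hbot).symm
            set G : ℝ := (g (x', y)).toReal with hGdef
            rw [hgeq, ← EReal.coe_mul, ← EReal.coe_add] at hchain
            have hre : t * G + (1 - t) * mo < b := by exact_mod_cast hchain
            have hre2 : G ≤ (b - (1 - t) * mo) / t := by
              rw [le_div_iff₀ ht0]; linarith
            rw [hgeq]
            exact_mod_cast hre2
        have hballpos : 0 < (1 - t) * ε / (2 * t) := by positivity
        have hevx : ∀ᶠ x' in 𝓝 x,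
            (⨆ y : Fin m → ℝ, g (x', y)) ≤ (((b - (1 - t) * mo) / t : ℝ) : EReal) := by
          filter_upwards [Metric.ball_mem_nhds x hballpos] with x' hx' using hball x' hx'
        calc limsup (fun z : Fin n → ℝ => ⨆ y : Fin m → ℝ, g (z, y)) (𝓝 x)
            ≤ (((b - (1 - t) * mo) / t : ℝ) : EReal) :=
              limsup_le_of_le (by isBoundedDefault) hevx
          _ ≤ ((b + η : ℝ) : EReal) := by exact_mod_cast hβt.le
      by_contra hcon
      push_neg at hcon
      obtain ⟨b', hb'₁, hb'₂⟩ := EReal.exists_between_coe_real hcon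
      have hbb' : b < b' := by exact_mod_cast hb'₁
      have hk := key (b' - b) (by linarith)
      rw [show b + (b' - b) = b' by ring] at hk
      exact hb'₂.not_ge hk
    have hRx : ∀ x : Fin n → ℝ,
        limsup (fun t : ℝ => ⨆ y : Fin m → ℝ, g (t • x + (1 - t) • x₀, y)) (𝓝[<] (1 : ℝ))
          = limsup (fun z : Fin n → ℝ => ⨆ y : Fin m → ℝ, g (z, y)) (𝓝 x) :=
      fun x => le_antisymm (h2a x) (h2b x)
    intro x cE hcE
    simp only at hcE ⊢
    rw [hRx x] at hcE
    obtain ⟨c', hc'₁, hc'₂⟩ := exists_between hcE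
    have hev : ∀ᶠ z in 𝓝 x, (⨆ y : Fin m → ℝ, g (z, y)) < c' :=
      eventually_lt_of_limsup_lt hc'₁
    obtain ⟨U, hUsub, hUopen, hxU⟩ := _root_.mem_nhds_iff.mp hev
    filter_upwards [hUopen.mem_nhds hxU] with x' hx'
    rw [hRx x']
    refine lt_of_le_of_lt (limsup_le_of_le (by isBoundedDefault) ?_) hc'₂
    filter_upwards [hUopen.mem_nhds hx'] with z hz using (hUsub hz).le
  · -- Part 3 : rational suprema
    intro x
    refine le_antisymm ?_ ?_
    · -- sup over ℝ ≤ sup over ℚ (in the limsup): the hard direction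
      have hg₀bot : g (x₀, y₀) ≠ ⊥ := hdom _ (by simpa using hε)
      set c₀ : ℝ := (g (x₀, y₀)).toReal with hc₀
      have hg₀ : g (x₀, y₀) = (c₀ : EReal) := (EReal.coe_toReal (hne_top _) hg₀bot).symm
      refine le_of_forall_lt fun cE hcE => ?_
      obtain ⟨M, hM₁, hM₂⟩ := EReal.exists_between_coe_real hcE
      obtain ⟨b', hb'₁, hb'₂⟩ := EReal.exists_between_coe_real hM₁
      have hb'M : b' < M := by exact_mod_cast hb'₂
      refine lt_of_lt_of_le hb'₁
        (le_limsup_of_frequently_le ?_ (by isBoundedDefault))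
      rw [Filter.frequently_iff]
      intro U hU
      obtain ⟨a', ha', hsub⟩ := mem_nhdsLT_iff_exists_Ioo_subset.mp hU
      have ha'1 : a' < 1 := ha'
      have hfreqM : ∃ᶠ t in 𝓝[<] (1 : ℝ),
          (M : EReal) < ⨆ y : Fin m → ℝ, g (t • x + (1 - t) • x₀, y) :=
        frequently_lt_of_lt_limsup (by isBoundedDefault) hM₂
      -- choice of σ
      set σ : ℝ := min (min (1 / 2) ((M - b') / (|M - c₀| + 1))) ((1 - a') / 2) with hσdef
      have habs : 0 < |M - c₀| + 1 := by positivity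
      have hσpos : 0 < σ := by
        refine lt_min (lt_min (by norm_num) ?_) (by linarith)
        exact div_pos (by linarith) habs
      have hσhalf : σ ≤ 1 / 2 := le_trans (min_le_left _ _) (min_le_left _ _)
      have hσM : σ ≤ (M - b') / (|M - c₀| + 1) := le_trans (min_le_left _ _) (min_le_right _ _)
      have h1σ : 0 < 1 - σ := by linarith
      have hσa' : a' < 1 - σ := by
        have hh : σ ≤ (1 - a') / 2 := min_le_right _ _
        linarith
      -- pick t with large sup, close enough to 1
      have hIooT : ∀ᶠ t in 𝓝[<] (1 : ℝ), t ∈ Set.Ioo (a' / (1 - σ)) 1 :=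
        Filter.eventually_mem_set.mpr (Ioo_mem_nhdsLT ((div_lt_one h1σ).mpr hσa'))
      obtain ⟨t, hMt, htIoo⟩ := (hfreqM.and_eventually hIooT).exists
      set s : ℝ := (1 - σ) * t with hsdef
      have hsIoo : s ∈ Set.Ioo a' 1 := by
        constructor
        · have h1 : a' / (1 - σ) < t := htIoo.1
          calc a' = (1 - σ) * (a' / (1 - σ)) := by field_simp
            _ < (1 - σ) * t := by exact mul_lt_mul_of_pos_left h1 h1σ
        · calc (1 - σ) * t < (1 - σ) * 1 := mul_lt_mul_of_pos_left htIoo.2 h1σ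
            _ ≤ 1 := by linarith
      refine ⟨s, hsub hsIoo, ?_⟩
      -- the witness y at parameter t
      rw [lt_iSup_iff] at hMt
      obtain ⟨y, hy⟩ := hMt
      have hgbot : g (t • x + (1 - t) • x₀, y) ≠ ⊥ := by
        intro hh
        rw [hh] at hy
        exact (not_lt_bot hy)
      have hgG : g (t • x + (1 - t) • x₀, y)
          = (((g (t • x + (1 - t) • x₀, y)).toReal : ℝ) : EReal) :=
        (EReal.coe_toReal (hne_top _) hgbot).symm
      set G : ℝ := (g (t • x + (1 - t) • x₀, y)).toReal with hGdef
      have hMG : M < G := by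
        rw [hgG] at hy
        exact_mod_cast hy
      set yσ : Fin m → ℝ := (1 - σ) • y + σ • y₀ with hyσ
      -- slice concavity
      have hslice_concave : ∀ w₁ w₂ : Fin m → ℝ, ∀ a b : ℝ, 0 ≤ a → 0 ≤ b → a + b = 1 →
          (a : EReal) * g (s • x + (1 - s) • x₀, w₁) + (b : EReal) * g (s • x + (1 - s) • x₀, w₂)
            ≤ g (s • x + (1 - s) • x₀, a • w₁ + b • w₂) := by
        intro w₁ w₂ a b ha hb hab
        have hh := hconc (s • x + (1 - s) • x₀, w₁) (s • x + (1 - s) • x₀, w₂) a b ha hb hab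
        rwa [Prod.smul_mk, Prod.smul_mk, Prod.mk_add_mk, Convex.combo_self hab] at hh
      -- combination identity
      have hcombo : ∀ w : Fin m → ℝ,
          (1 - σ) • ((t • x + (1 - t) • x₀ : Fin n → ℝ), y)
              + σ • ((x₀ : Fin n → ℝ), y₀ + σ⁻¹ • (w - yσ))
            = (s • x + (1 - s) • x₀, w) := by
        intro w
        have hσne : σ ≠ 0 := ne_of_gt hσpos
        rw [Prod.smul_mk, Prod.smul_mk, Prod.mk_add_mk]
        congr 1
        · rw [hsdef]; match_scalars <;> ring
        · rw [hyσ]; match_scalars <;> (field_simp; try ring)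
      -- slice is > ⊥ on the ball around yσ
      have hslice_bot : ∀ w ∈ Metric.ball yσ (σ * ε), g (s • x + (1 - s) • x₀, w) ≠ ⊥ := by
        intro w hw
        have hq2 : g ((x₀ : Fin n → ℝ), y₀ + σ⁻¹ • (w - yσ)) ≠ ⊥ := by
          apply hdom
          rw [Prod.dist_eq]
          simp only [dist_self]
          have hd2 : dist (y₀ + σ⁻¹ • (w - yσ)) y₀ < ε := by
            rw [dist_eq_norm, add_sub_cancel_left, norm_smul, Real.norm_eq_abs,
              abs_of_pos (inv_pos.mpr hσpos)]
            have hww : ‖w - yσ‖ < σ * ε := by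
              rw [← dist_eq_norm]; exact Metric.mem_ball.mp hw
            calc σ⁻¹ * ‖w - yσ‖ < σ⁻¹ * (σ * ε) :=
                mul_lt_mul_of_pos_left hww (inv_pos.mpr hσpos)
              _ = ε := by field_simp
          exact max_lt (by linarith) hd2
        have hq2G : g ((x₀ : Fin n → ℝ), y₀ + σ⁻¹ • (w - yσ))
            = (((g ((x₀ : Fin n → ℝ), y₀ + σ⁻¹ • (w - yσ))).toReal : ℝ) : EReal) :=
          (EReal.coe_toReal (hne_top _) hq2).symm
        have hcc := hconc ((t • x + (1 - t) • x₀ : Fin n → ℝ), y)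
          ((x₀ : Fin n → ℝ), y₀ + σ⁻¹ • (w - yσ)) (1 - σ) σ h1σ.le hσpos.le (by ring)
        rw [hcombo w] at hcc
        intro hbotc
        rw [hbotc, le_bot_iff, hgG, hq2G, ← EReal.coe_mul, ← EReal.coe_mul,
          ← EReal.coe_add] at hcc
        exact EReal.coe_ne_bot _ hcc
      -- continuity of the slice
      have hcont := concaveE_continuousOn hslice_concave (c := yσ) (r := σ * ε) hslice_bot
        (fun w => hne_top _)
      have hballpos : 0 < σ * ε := mul_pos hσpos hε
      -- value at yσ
      have hval : ((1 - σ) * G + σ * c₀ : ℝ) ≤ (g (s • x + (1 - s) • x₀, yσ)).toReal := by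
        have hcc := hconc ((t • x + (1 - t) • x₀ : Fin n → ℝ), y) ((x₀ : Fin n → ℝ), y₀)
          (1 - σ) σ h1σ.le hσpos.le (by ring)
        have hpt : (1 - σ) • ((t • x + (1 - t) • x₀ : Fin n → ℝ), y)
            + σ • ((x₀ : Fin n → ℝ), y₀) = (s • x + (1 - s) • x₀, yσ) := by
          have hcy := hcombo yσ
          rwa [sub_self, smul_zero, add_zero] at hcy
        rw [hpt, hgG, hg₀, ← EReal.coe_mul, ← EReal.coe_mul, ← EReal.coe_add] at hcc
        have hh := EReal.toReal_le_toReal hcc (EReal.coe_ne_bot _) (hne_top _)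
        rw [EReal.toReal_coe] at hh
        exact hh
      -- b' is below the value
      have hrb' : b' ≤ (1 - σ) * M + σ * c₀ := by
        have h2 : σ * (M - c₀) ≤ σ * |M - c₀| :=
          mul_le_mul_of_nonneg_left (le_abs_self _) hσpos.le
        have h3 : σ * |M - c₀| ≤ (M - b') / (|M - c₀| + 1) * |M - c₀| :=
          mul_le_mul_of_nonneg_right hσM (abs_nonneg _)
        have h4 : (M - b') / (|M - c₀| + 1) * |M - c₀| < M - b' := by
          rw [div_mul_eq_mul_div, div_lt_iff₀ habs]
          nlinarith [abs_nonneg (M - c₀), sub_pos.mpr hb'M]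
        nlinarith
      have hrval : b' < (g (s • x + (1 - s) • x₀, yσ)).toReal := by
        have hσlt1 : σ < 1 := by linarith
        have hgap : (1 - σ) * M + σ * c₀ < (1 - σ) * G + σ * c₀ := by nlinarith
        linarith
      -- continuity at yσ gives a rational point
      have hcat : ContinuousAt (fun w => (g (s • x + (1 - s) • x₀, w)).toReal) yσ :=
        hcont.continuousAt (Metric.ball_mem_nhds _ hballpos)
      have hevw : ∀ᶠ w in 𝓝 yσ,
          b' < (g (s • x + (1 - s) • x₀, w)).toReal ∧ w ∈ Metric.ball yσ (σ * ε) :=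
        (hcat.eventually (eventually_gt_nhds hrval)).and
          (Filter.eventually_mem_set.mpr (Metric.ball_mem_nhds _ hballpos))
      obtain ⟨δ, hδpos, hδsub⟩ := Metric.eventually_nhds_iff.mp hevw
      obtain ⟨qv, hqv⟩ := exists_rat_vec_near yσ hδpos
      have hq := hδsub hqv
      have hgq : g (s • x + (1 - s) • x₀, fun i => (qv i : ℝ))
          = (((g (s • x + (1 - s) • x₀, fun i => (qv i : ℝ))).toReal : ℝ) : EReal) :=
        (EReal.coe_toReal (hne_top _) (hslice_bot _ hq.2)).symm
      calc (b' : EReal) ≤ g (s • x + (1 - s) • x₀, fun i => (qv i : ℝ)) := by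
            rw [hgq]; exact_mod_cast hq.1.le
        _ ≤ ⨆ q : Fin m → ℚ, g (s • x + (1 - s) • x₀, fun i => (q i : ℝ)) :=
            le_iSup (fun q : Fin m → ℚ => g (s • x + (1 - s) • x₀, fun i => (q i : ℝ))) qv
    · -- sup over ℚ ≤ sup over ℝ
      refine limsup_le_limsup (Eventually.of_forall fun t => ?_) (by isBoundedDefault)
        (by isBoundedDefault)
      exact iSup_le fun q =>
        le_iSup (fun y : Fin m → ℝ => g (t • x + (1 - t) • x₀, y)) (fun i => (q i : ℝ))
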